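/- For even k ≥ 2, the proportion bal_k(n)/k^n of bw-balanced k-ary words of length n is asymptotic to √(2/(πn)) as n → ∞, i.e., lim_{n→∞} (bal_k(n)/k^n) · √(πn/2) = 1. -/

import Mathlib

/-- Black contribution of letter `h` at (1-based) index `i`. -/
def blackC (i h : ℕ) : ℕ := if Odd i then (h + 1) / 2 else h / 2

/-- White contribution of letter `h` at (1-based) index `i`. -/
def whiteC (i h : ℕ) : ℕ := if Odd i then h / 2 else (h + 1) / 2

/-- Number of black cells in the bargraph of the word `w`. -/
def black {n : ℕ} (w : Fin n → ℕ) : ℕ := ∑ i : Fin n, blackC (i.1 + 1) (w i)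

/-- Number of white cells in the bargraph of the word `w`. -/
def white {n : ℕ} (w : Fin n → ℕ) : ℕ := ∑ i : Fin n, whiteC (i.1 + 1) (w i)

/-- The number of bw-balanced `k`-ary words of length `n`. -/
def bal (k n : ℕ) : ℕ :=
  (Finset.univ.filter fun u : Fin n → Fin k =>
      black (fun i => (u i).1 + 1) = white (fun i => (u i).1 + 1)).card

open Finset Filter Real Stirling

/-! ### Combinatorial part -/

lemma diffC (i h : ℕ) : (blackC (i+1) h : ℤ) - whiteC (i+1) h
    = if Even i then ((h % 2 : ℕ) : ℤ) else -((h % 2 : ℕ) : ℤ) := by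
  rcases Nat.even_or_odd i with he | ho
  · have h1 : Odd (i+1) := Even.add_one he
    rw [blackC, whiteC, if_pos h1, if_pos h1, if_pos he]
    omega
  · have h1 : ¬ Odd (i+1) := by simp [Nat.even_add_one, Nat.not_even_iff_odd, ho]
    rw [blackC, whiteC, if_neg h1, if_neg h1, if_neg (Nat.not_even_iff_odd.mpr ho)]
    omega

lemma balanced_iff {n : ℕ} (w : Fin n → ℕ) :
    black w = white w ↔
      ∑ i : Fin n, (if Even i.1 then ((w i % 2 : ℕ) : ℤ) else -((w i % 2 : ℕ) : ℤ)) = 0 := by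
  have hdiff : (black w : ℤ) - white w =
      ∑ i : Fin n, (if Even i.1 then ((w i % 2 : ℕ) : ℤ) else -((w i % 2 : ℕ) : ℤ)) := by
    rw [black, white]
    push_cast
    rw [← Finset.sum_sub_distrib]
    exact Finset.sum_congr rfl fun i _ => diffC i.1 (w i)
  constructor
  · intro h; rw [← hdiff, h]; ring
  · intro h
    rw [h] at hdiff
    have : (black w : ℤ) = white w := by linarith
    exact_mod_cast this

lemma fin2_val (x : Fin 2) : (if x = 1 then 1 else 0 : ℕ) = (x : ℕ) := by
  have hlt := x.isLt
  simp only [Fin.ext_iff, Fin.val_one]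
  split_ifs with h <;> omega

lemma card_sum_eq (n r : ℕ) :
    Fintype.card {ε : Fin n → Fin 2 // ∑ i, ((ε i : ℕ)) = r} = n.choose r := by
  have hfl : n.choose r = Fintype.card {s : Finset (Fin n) // s.card = r} := by
    rw [Fintype.card_finset_len, Fintype.card_fin]
  rw [hfl]
  apply Fintype.card_congr
  refine ⟨fun ε => ⟨Finset.univ.filter (fun i => ε.1 i = 1), ?_⟩,
    fun s => ⟨fun i => if i ∈ s.1 then 1 else 0, ?_⟩, ?_, ?_⟩
  · have h2 := ε.2
    rw [Finset.card_filter]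
    conv_rhs => rw [← h2]
    exact Finset.sum_congr rfl fun i _ => fin2_val (ε.1 i)
  · simp only [apply_ite (Fin.val : Fin 2 → ℕ), Fin.val_one, Fin.val_zero]
    rw [Finset.sum_ite_mem, Finset.univ_inter]
    simpa using s.2
  · intro ε
    apply Subtype.ext
    funext i
    simp only [Finset.mem_filter, Finset.mem_univ, true_and]
    by_cases h : ε.1 i = 1
    · simp [h]
    · have hlt := (ε.1 i).isLt
      have : ε.1 i = 0 := by
        rw [Fin.ext_iff] at h ⊢
        simp only [Fin.val_one, Fin.val_zero] at *
        omega
      simp [h, this]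
  · intro s
    apply Subtype.ext
    ext i
    simp only [Finset.mem_filter, Finset.mem_univ, true_and]
    by_cases h : i ∈ s.1 <;> simp [h]

/-- parity-signed sum condition on 0/1 vectors -/
def P2 {n : ℕ} (ε : Fin n → Fin 2) : Prop :=
  ∑ i : Fin n, (if Even i.1 then ((((ε i).1 + 1) % 2 : ℕ) : ℤ) else -((((ε i).1 + 1) % 2 : ℕ) : ℤ)) = 0

instance {n : ℕ} : DecidablePred (P2 (n := n)) := fun ε => by unfold P2; infer_instance

lemma card_odd_range (n : ℕ) : #(Finset.range n |>.filter fun x => ¬ Even x) = n / 2 := by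
  induction n with
  | zero => simp
  | succ n ih =>
    rw [Finset.range_add_one, Finset.filter_insert]
    by_cases h : Even n
    · rw [if_neg (by simpa using h), ih]
      obtain ⟨m, hm⟩ := h
      omega
    · rw [if_pos h, Finset.card_insert_of_notMem (by simp), ih]
      have : n % 2 = 1 := Nat.odd_iff.mp (Nat.not_even_iff_odd.mp h)
      omega

lemma card_odd_fin (n : ℕ) : #(Finset.univ.filter fun i : Fin n => ¬ Even i.1) = n / 2 := by
  rw [← card_odd_range n, Finset.card_filter, Finset.card_filter,
    ← Fin.sum_univ_eq_sum_range (fun x => if ¬ Even x then 1 else 0) n]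

/-- flip on Fin 2 -/
def flip2 (x : Fin 2) : Fin 2 := ⟨1 - x.1, by omega⟩

def gmap {n : ℕ} (ε : Fin n → Fin 2) : Fin n → Fin 2 :=
  fun i => if Even i.1 then flip2 (ε i) else ε i

lemma gmap_invol {n : ℕ} : Function.Involutive (gmap (n := n)) := by
  intro ε
  funext i
  unfold gmap flip2
  by_cases h : Even i.1
  · simp only [if_pos h]
    apply Fin.ext
    have := (ε i).isLt
    simp
    omega
  · simp [h]

lemma card_P2 (n : ℕ) : Fintype.card {ε : Fin n → Fin 2 // P2 ε} = n.choose (n / 2) := by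
  rw [← card_sum_eq n (n/2)]
  apply Fintype.card_congr
  apply Equiv.subtypeEquiv (Function.Involutive.toPerm _ gmap_invol)
  intro ε
  show P2 ε ↔ ∑ i, ((gmap ε i : ℕ)) = n / 2
  have hsum : ∑ i : Fin n, ((gmap ε i : ℕ) : ℤ) =
      (∑ i : Fin n, (if Even i.1 then ((((ε i).1 + 1) % 2 : ℕ) : ℤ) else -((((ε i).1 + 1) % 2 : ℕ) : ℤ)))
      + (n / 2 : ℕ) := by
    rw [← card_odd_fin n, Finset.card_filter]
    push_cast
    rw [← Finset.sum_add_distrib]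
    apply Finset.sum_congr rfl
    intro i _
    have hlt := (ε i).isLt
    unfold gmap flip2
    by_cases h : Even i.1 <;> simp [h] <;> omega
  unfold P2
  constructor
  · intro h
    have h2 : ∑ i : Fin n, ((gmap ε i : ℕ) : ℤ) = (n / 2 : ℕ) := by rw [hsum, h]; ring
    exact_mod_cast h2
  · intro h
    have h2 : ∑ i : Fin n, ((gmap ε i : ℕ) : ℤ) = (n / 2 : ℕ) := by exact_mod_cast h
    rw [h2] at hsum
    linarith

def pairEquiv (m : ℕ) : Fin (2 * m) ≃ Fin 2 × Fin m where
  toFun x := (⟨x.1 % 2, by omega⟩, ⟨x.1 / 2, by omega⟩)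
  invFun p := ⟨p.1.1 + 2 * p.2.1, by have := p.1.isLt; have := p.2.isLt; omega⟩
  left_inv x := by apply Fin.ext; simp; try omega
  right_inv p := by
    have h1 := p.1.isLt
    have h2 := p.2.isLt
    apply Prod.ext
    · apply Fin.ext; simp; try omega
    · apply Fin.ext; simp; try omega

def bigE (n m : ℕ) : (Fin n → Fin (2*m)) ≃ (Fin n → Fin 2) × (Fin n → Fin m) :=
  (Equiv.arrowCongr (Equiv.refl (Fin n)) (pairEquiv m)).trans
    (Equiv.arrowProdEquivProdArrow _ _ _)

def fstSubtype {A B : Type*} (p : A → Prop) : {x : A × B // p x.1} ≃ {a // p a} × B where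
  toFun x := (⟨x.1.1, x.2⟩, x.1.2)
  invFun y := ⟨(y.1.1, y.2), y.1.2⟩
  left_inv x := rfl
  right_inv y := rfl

lemma bal_eq (k n : ℕ) (hk : 2 ≤ k) (hke : Even k) :
    bal k n = n.choose (n / 2) * (k / 2) ^ n := by
  obtain ⟨m, hm⟩ := hke
  have hk2 : k = 2 * m := by omega
  have hm2 : k / 2 = m := by omega
  subst hk2
  rw [hm2]
  have hcard : bal (2*m) n = Fintype.card {u : Fin n → Fin (2*m) //
      black (fun i => (u i).1 + 1) = white (fun i => (u i).1 + 1)} := by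
    rw [bal, Fintype.card_subtype]
  rw [hcard]
  clear hcard
  have hfst : ∀ (u : Fin n → Fin (2*m)) (i : Fin n), ((bigE n m u).1 i).1 = (u i).1 % 2 := by
    intro u i; rfl
  have hiff : ∀ u : Fin n → Fin (2*m),
      (black (fun i => (u i).1 + 1) = white (fun i => (u i).1 + 1)) ↔ P2 (bigE n m u).1 := by
    intro u
    rw [balanced_iff]
    have hS : ∑ i : Fin n, (if Even i.1 then ((((u i).1 + 1) % 2 : ℕ) : ℤ) else -((((u i).1 + 1) % 2 : ℕ) : ℤ))
        = ∑ i : Fin n, (if Even i.1 then (((((bigE n m u).1 i).1 + 1) % 2 : ℕ) : ℤ) else -(((((bigE n m u).1 i).1 + 1) % 2 : ℕ) : ℤ)) := by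
      apply Finset.sum_congr rfl
      intro i _
      have h2 : (((u i).1 + 1) % 2 : ℕ) = (((bigE n m u).1 i).1 + 1) % 2 := by
        have h3 := hfst u i
        omega
      rw [h2]
    rw [P2, hS]
  have e1 : {u : Fin n → Fin (2*m) //
      black (fun i => (u i).1 + 1) = white (fun i => (u i).1 + 1)} ≃
      {x : (Fin n → Fin 2) × (Fin n → Fin m) // P2 x.1} :=
    (Equiv.subtypeEquiv (bigE n m) hiff)
  rw [Fintype.card_congr (e1.trans (fstSubtype P2)), Fintype.card_prod, card_P2]
  congr 1
  rw [Fintype.card_fun, Fintype.card_fin, Fintype.card_fin]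

/-! ### Analytic part -/

theorem keyid (m : ℕ) (hm : 1 ≤ m) :
    ((2*m).choose m : ℝ) / 4^m * Real.sqrt (π * m) =
      stirlingSeq (2*m) / (stirlingSeq m)^2 * Real.sqrt π := by
  have hm0 : (0:ℝ) < m := by exact_mod_cast hm
  have hfac : ((2*m).choose m : ℝ) * ((m.factorial : ℕ) : ℝ)^2 = (((2*m).factorial : ℕ) : ℝ) := by
    have := Nat.choose_mul_factorial_mul_factorial (show m ≤ 2*m by omega)
    have h2 : 2*m - m = m := by omega
    rw [h2] at this
    push_cast [← this]; ring
  have he : (0:ℝ) < Real.exp 1 := Real.exp_pos 1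
  have hfm : (0:ℝ) < ((m.factorial : ℕ) : ℝ) := by exact_mod_cast Nat.factorial_pos m
  have hsm : (0:ℝ) < Real.sqrt m := Real.sqrt_pos.2 hm0
  have hsm2 : Real.sqrt m * Real.sqrt m = m := Real.mul_self_sqrt hm0.le
  have h4 : Real.sqrt (2*(2*m):ℝ) = 2 * Real.sqrt m := by
    rw [show (2*(2*m):ℝ) = 4 * m by ring, Real.sqrt_mul (by norm_num),
      show (4:ℝ) = 2^2 by norm_num, Real.sqrt_sq (by norm_num)]
  have h2m : Real.sqrt (2*m:ℝ) * Real.sqrt (2*m:ℝ) = 2*m := Real.mul_self_sqrt (by positivity)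
  have h2mpos : (0:ℝ) < Real.sqrt (2*m:ℝ) := Real.sqrt_pos.2 (by positivity)
  have hπm : Real.sqrt (π * m) = Real.sqrt π * Real.sqrt m := Real.sqrt_mul pi_pos.le m
  have hpow : ∀ x : ℝ, x^(2*m) = (x^m)^2 := fun x => by rw [mul_comm, pow_mul]
  rw [stirlingSeq, stirlingSeq]
  push_cast
  rw [h4, hπm, ← hfac]
  rw [hpow, show ((2:ℝ)*m/rexp 1)^m = 2^m * (m/rexp 1)^m by rw [← mul_pow]; ring_nf]
  have hp : (0:ℝ) < ((m:ℝ)/rexp 1)^m := by positivity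
  field_simp
  ring_nf
  rw [Real.sq_sqrt (Nat.cast_nonneg m), Real.sq_sqrt (by positivity : (0:ℝ) ≤ m*2), show ((2:ℝ))^(m*2) = (2:ℝ)^m * 2^m by rw [pow_mul]; ring, show ((4:ℝ))^m = 2^m * 2^m by rw [← mul_pow]; norm_num]
  ring

theorem cb_tendsto :
    Tendsto (fun m : ℕ => ((2*m).choose m : ℝ) / 4^m * Real.sqrt (π * m)) atTop (nhds 1) := by
  have h2 : Tendsto (fun m : ℕ => 2*m) atTop atTop :=
    StrictMono.tendsto_atTop (fun a b h => by omega)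
  have hs2 : Tendsto (fun m : ℕ => stirlingSeq (2*m)) atTop (nhds (Real.sqrt π)) :=
    tendsto_stirlingSeq_sqrt_pi.comp h2
  have hs : Tendsto (fun m : ℕ => (stirlingSeq m)^2) atTop (nhds ((Real.sqrt π)^2)) :=
    tendsto_stirlingSeq_sqrt_pi.pow 2
  have hπ : (Real.sqrt π) ^ 2 = π := Real.sq_sqrt pi_pos.le
  have hne : (Real.sqrt π)^2 ≠ 0 := by rw [hπ]; exact pi_pos.ne'
  have hmain : Tendsto (fun m : ℕ => stirlingSeq (2*m) / (stirlingSeq m)^2 * Real.sqrt π)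
      atTop (nhds (Real.sqrt π / (Real.sqrt π)^2 * Real.sqrt π)) :=
    (hs2.div hs hne).mul_const _
  have : Real.sqrt π / (Real.sqrt π)^2 * Real.sqrt π = 1 := by
    rw [hπ]; rw [div_mul_eq_mul_div, ← Real.sqrt_mul_self pi_pos.le]
    field_simp
    rw [Real.sq_sqrt (Real.sqrt_nonneg _)]
  rw [this] at hmain
  apply hmain.congr'
  filter_upwards [eventually_ge_atTop 1] with m hm
  exact (keyid m hm).symm

theorem even_odd_tendsto {f : ℕ → ℝ} {a : ℝ}
    (he : Tendsto (fun m => f (2*m)) atTop (nhds a))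
    (ho : Tendsto (fun m => f (2*m+1)) atTop (nhds a)) : Tendsto f atTop (nhds a) := by
  rw [Metric.tendsto_atTop] at he ho ⊢
  intro ε hε
  obtain ⟨N1, h1⟩ := he ε hε
  obtain ⟨N2, h2⟩ := ho ε hε
  refine ⟨2*N1 + 2*N2 + 2, fun n hn => ?_⟩
  rcases Nat.even_or_odd n with ⟨m, hm⟩ | ⟨m, hm⟩
  · have : n = 2*m := by omega
    rw [this]; exact h1 m (by omega)
  · have : n = 2*m+1 := by omega
    rw [this]; exact h2 m (by omega)

theorem aux1 : Tendsto (fun m : ℕ => ((2*m+1 : ℝ)) / (2*(m+1))) atTop (nhds 1) := by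
  have hmono : StrictMono (fun m : ℕ => 2*m+2) := fun a b h => by simp; omega
  have h0 : Tendsto (fun m : ℕ => (1:ℝ)/(2*m+2)) atTop (nhds 0) := by
    have := (tendsto_one_div_atTop_nhds_zero_nat (𝕜 := ℝ)).comp hmono.tendsto_atTop
    apply this.congr
    intro m; simp [Function.comp]
  have := (tendsto_const_nhds (x := (1:ℝ)) (f := atTop (α := ℕ))).sub h0
  rw [sub_zero] at this
  apply this.congr
  intro m
  have h : (2*(m:ℝ)+2) ≠ 0 := by positivity
  field_simp
  ring

theorem aux2 : Tendsto (fun m : ℕ => Real.sqrt ((2*m+1 : ℝ) / (2*m))) atTop (nhds 1) := by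
  have hmono : StrictMono (fun m : ℕ => 2*m) := fun a b h => by simp; omega
  have h0 : Tendsto (fun m : ℕ => (1:ℝ)/(2*m)) atTop (nhds 0) := by
    have := (tendsto_one_div_atTop_nhds_zero_nat (𝕜 := ℝ)).comp hmono.tendsto_atTop
    apply this.congr
    intro m; simp [Function.comp]
  have h1 : Tendsto (fun m : ℕ => (2*m+1 : ℝ) / (2*m)) atTop (nhds 1) := by
    have := (tendsto_const_nhds (x := (1:ℝ)) (f := atTop (α := ℕ))).add h0
    rw [add_zero] at this
    apply this.congr'
    filter_upwards [eventually_ge_atTop 1] with m hm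
    have hm0 : ((m:ℝ)) ≠ 0 := by
      have : (1:ℝ) ≤ m := by exact_mod_cast hm
      linarith
    field_simp
  have h2 := (Real.continuous_sqrt.tendsto 1).comp h1
  rw [Real.sqrt_one] at h2
  exact h2

theorem choose_half_tendsto :
    Tendsto (fun n : ℕ => (n.choose (n/2) : ℝ) / 2^n * Real.sqrt (π * n / 2))
      atTop (nhds 1) := by
  apply even_odd_tendsto
  · apply cb_tendsto.congr
    intro m
    have h1 : (2*m)/2 = m := by omega
    have h2 : ((2:ℝ))^(2*m) = 4^m := by
      rw [pow_mul]; norm_num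
    rw [h1, h2]
    congr 1
    push_cast
    ring_nf
  · have key : ∀ m : ℕ, 1 ≤ m →
        ((2*m+1).choose ((2*m+1)/2) : ℝ) / 2^(2*m+1) * Real.sqrt (π * (2*m+1) / 2) =
        (((2*m).choose m : ℝ) / 4^m * Real.sqrt (π * m)) *
          (((2*m+1 : ℝ)) / (2*(m+1)) * Real.sqrt ((2*m+1 : ℝ) / (2*m))) := by
      intro m hm
      have hm0 : (0:ℝ) < m := by exact_mod_cast hm
      have h1 : (2*m+1)/2 = m := by omega
      have hchN : (2*m+1) * ((2*m).choose m) = ((2*m+1).choose m) * (m+1) := by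
        have hs := Nat.add_one_mul_choose_eq (2*m) m
        have hsym : (2*m+1).choose (m+1) = (2*m+1).choose m := by
          have := Nat.choose_symm (show m+1 ≤ 2*m+1 by omega)
          simpa [show 2*m+1-(m+1) = m by omega] using this.symm
        simpa [hsym] using hs
      have hchR : ((2*m+1).choose m : ℝ) = ((2*m).choose m : ℝ) * (2*m+1) / (m+1) := by
        rw [eq_div_iff (by positivity)]
        have h := congrArg (Nat.cast : ℕ → ℝ) hchN
        push_cast at h ⊢
        linarith
      have hsq : Real.sqrt (π * (2*m+1) / 2) = Real.sqrt (π * m) * Real.sqrt ((2*m+1 : ℝ)/(2*m)) := by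
        rw [← Real.sqrt_mul (by positivity)]
        congr 1
        field_simp
      have hp : ((2:ℝ))^(2*m+1) = 2 * 4^m := by
        rw [pow_succ, pow_mul]; norm_num; ring
      rw [h1, hchR]
      push_cast
      rw [hsq, hp]
      have h4 : ((4:ℝ))^m ≠ 0 := by positivity
      have hm1 : ((m:ℝ)+1) ≠ 0 := by positivity
      field_simp
    have := (cb_tendsto.mul (aux1.mul aux2))
    rw [show ((1:ℝ)*1) = 1 by norm_num, mul_one] at this
    apply this.congr'
    filter_upwards [eventually_ge_atTop 1] with m hm
    push_cast
    exact (key m hm).symm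

theorem stmt_17 (k : ℕ) (hk : 2 ≤ k) (hke : Even k) :
    Filter.Tendsto
      (fun n : ℕ => (bal k n : ℝ) / (k : ℝ) ^ n * Real.sqrt (Real.pi * n / 2))
      Filter.atTop (nhds 1) := by
  obtain ⟨m, hm⟩ := hke
  have hk2 : k = 2 * m := by omega
  have hm1 : 1 ≤ m := by omega
  apply choose_half_tendsto.congr
  intro n
  have hbal : (bal k n : ℝ) = (n.choose (n/2) : ℝ) * ((k/2 : ℕ) : ℝ)^n := by
    exact_mod_cast congrArg (Nat.cast : ℕ → ℝ) (bal_eq k n hk ⟨m, hm⟩)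
  have hhalf : ((k/2 : ℕ) : ℝ) = (m : ℝ) := by
    rw [show k/2 = m by omega]
  have hkr : (k : ℝ) = 2 * m := by exact_mod_cast hk2
  rw [hbal, hhalf, hkr]
  have hm0 : (0:ℝ) < m := by exact_mod_cast hm1
  rw [mul_pow]
  have h2n : ((2:ℝ))^n ≠ 0 := by positivity
  have hmn : ((m:ℝ))^n ≠ 0 := by positivity
  field_simp
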